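/- Let (X, μ) be a measure space with μ(X) < ∞ and let f satisfy assumption (f1). If u, v : X → ℝ are measurable functions belonging to L⁶(μ), then f∘u − f∘v belongs to L²(μ) and ‖f∘u − f∘v‖_{L²(μ)} ≤ C_f (μ(X)^{1/3} + ‖u‖_{L⁶(μ)}² + ‖v‖_{L⁶(μ)}²) ‖u − v‖_{L⁶(μ)}. -/

import Mathlib

open MeasureTheory
open scoped ENNReal

lemma aux_pt (f : ℝ → ℝ) (Cf : ℝ) (hCf : 0 < Cf) (hf : ContDiff ℝ 1 f)
    (hf' : ∀ z : ℝ, |deriv f z| ≤ Cf * (1 + z ^ 2)) (a b : ℝ) :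
    |f a - f b| ≤ Cf * (1 + a ^ 2 + b ^ 2) * |a - b| := by
  have hd : ∀ x ∈ Set.uIcc b a, DifferentiableAt ℝ f x := fun x _ =>
    hf.differentiable one_ne_zero x
  have bound : ∀ x ∈ Set.uIcc b a, ‖deriv f x‖ ≤ Cf * (1 + a ^ 2 + b ^ 2) := by
    intro x hx
    have hxa : |x| ≤ max |b| |a| := by
      rcases le_total b a with h | h
      · rw [Set.uIcc_of_le h, Set.mem_Icc] at hx
        exact abs_le_max_abs_abs hx.1 hx.2
      · rw [Set.uIcc_of_ge h, Set.mem_Icc] at hx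
        exact (abs_le_max_abs_abs hx.1 hx.2).trans (le_of_eq (max_comm _ _))
    have h2 : x ^ 2 ≤ (max |b| |a|) ^ 2 := by
      rw [← sq_abs x]; exact pow_le_pow_left₀ (abs_nonneg x) hxa 2
    have hx2 : x ^ 2 ≤ a ^ 2 + b ^ 2 := by
      rcases max_cases |b| |a| with ⟨h, _⟩ | ⟨h, _⟩ <;> rw [h] at h2 <;>
        nlinarith [sq_abs a, sq_abs b, sq_nonneg a, sq_nonneg b]
    calc ‖deriv f x‖ ≤ Cf * (1 + x ^ 2) := hf' x
      _ ≤ Cf * (1 + a ^ 2 + b ^ 2) := by nlinarith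
  have := (convex_uIcc b a).norm_image_sub_le_of_norm_deriv_le hd bound
    Set.left_mem_uIcc Set.right_mem_uIcc
  simpa [Real.norm_eq_abs] using this

/-- Let `(X, μ)` be a finite measure space and `f` satisfy assumption (f1):
`f` is `C¹`, `f 0 = 0`, `|f'(z)| ≤ C_f (1 + z²)`.  If `u, v ∈ L⁶(μ)`, then
`f∘u − f∘v ∈ L²(μ)` and
`‖f∘u − f∘v‖_{L²} ≤ C_f (μ(X)^{1/3} + ‖u‖_{L⁶}² + ‖v‖_{L⁶}²) ‖u − v‖_{L⁶}`. -/
theorem comp_f_sub_mem_L2 {X : Type*} [MeasurableSpace X] (μ : Measure X)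
    (hμ : μ Set.univ < ⊤)
    (f : ℝ → ℝ) (Cf : ℝ) (hCf : 0 < Cf) (hf : ContDiff ℝ 1 f) (hf0 : f 0 = 0)
    (hf' : ∀ z : ℝ, |deriv f z| ≤ Cf * (1 + z ^ 2))
    (u v : X → ℝ) (hu : Measurable u) (hv : Measurable v)
    (hu6 : MemLp u 6 μ) (hv6 : MemLp v 6 μ) :
    MemLp (fun x => f (u x) - f (v x)) 2 μ ∧
    eLpNorm (fun x => f (u x) - f (v x)) 2 μ ≤
      ENNReal.ofReal Cf *
        ((μ Set.univ) ^ (1 / 3 : ℝ) + (eLpNorm u 6 μ) ^ 2 + (eLpNorm v 6 μ) ^ 2) *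
        eLpNorm (fun x => u x - v x) 6 μ := by
  set φ : X → ℝ := fun x => Cf * (1 + u x ^ 2 + v x ^ 2) with hφdef
  have hφm : AEStronglyMeasurable φ μ :=
    (measurable_const.mul ((measurable_const.add (hu.pow measurable_const)).add
      (hv.pow measurable_const))).aestronglyMeasurable
  have huv : AEStronglyMeasurable (fun x => u x - v x) μ := (hu.sub hv).aestronglyMeasurable
  have hfuv : AEStronglyMeasurable (fun x => f (u x) - f (v x)) μ :=
    ((hf.continuous.measurable.comp hu).sub
      (hf.continuous.measurable.comp hv)).aestronglyMeasurable
  -- Step 1: pointwise domination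
  have hmono : eLpNorm (fun x => f (u x) - f (v x)) 2 μ ≤
      eLpNorm (φ • fun x => u x - v x) 2 μ := by
    refine eLpNorm_mono_ae (Filter.Eventually.of_forall fun x => ?_)
    have h0 : 0 ≤ Cf * (1 + u x ^ 2 + v x ^ 2) := by positivity
    show ‖f (u x) - f (v x)‖ ≤ ‖Cf * (1 + u x ^ 2 + v x ^ 2) * (u x - v x)‖
    rw [Real.norm_eq_abs, Real.norm_eq_abs, abs_mul, abs_of_nonneg h0]
    exact aux_pt f Cf hCf hf hf' (u x) (v x)
  -- Step 2: Hölder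
  have hhold : eLpNorm (φ • fun x => u x - v x) 2 μ ≤
      eLpNorm φ 3 μ * eLpNorm (fun x => u x - v x) 6 μ :=
    eLpNorm_smul_le_mul_eLpNorm huv hφm (hpqr := ⟨by
      rw [inv_eq_one_div, inv_eq_one_div, inv_eq_one_div]; symm
      have h3 : (1:ℝ≥0∞)/3 = 2/6 := by
        rw [ENNReal.div_eq_div_iff (by norm_num) (by norm_num) (by norm_num) (by norm_num)]
        norm_num
      rw [h3, ENNReal.div_add_div_same,
        ENNReal.div_eq_div_iff (by norm_num) (by norm_num) (by norm_num) (by norm_num)]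
      norm_num⟩)
  -- Step 3: bound on φ
  have hsq : ∀ w : X → ℝ, eLpNorm (fun x => w x ^ 2) 3 μ = eLpNorm w 6 μ ^ 2 := by
    intro w
    have h := eLpNorm_norm_rpow (μ := μ) (p := 3) (q := 2) w two_pos
    simp only [Real.norm_eq_abs, Real.rpow_two, sq_abs] at h
    rw [h, show (3 : ℝ≥0∞) * ENNReal.ofReal 2 = 6 by
      rw [ENNReal.ofReal_ofNat]; norm_num, ENNReal.rpow_two]
  have hφ3 : eLpNorm φ 3 μ ≤ ENNReal.ofReal Cf *
      ((μ Set.univ) ^ (1 / 3 : ℝ) + (eLpNorm u 6 μ) ^ 2 + (eLpNorm v 6 μ) ^ 2) := by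
    have hcs : φ = Cf • (fun x : X => (1 + u x ^ 2 + v x ^ 2 : ℝ)) := rfl
    rw [hcs, eLpNorm_const_smul, Real.enorm_eq_ofReal hCf.le]
    refine mul_le_mul_right ?_ _
    have h1 : AEStronglyMeasurable (fun x : X => (1 : ℝ) + u x ^ 2) μ :=
      (measurable_const.add (hu.pow measurable_const)).aestronglyMeasurable
    have h2 : AEStronglyMeasurable (fun x : X => v x ^ 2) μ :=
      (hv.pow measurable_const).aestronglyMeasurable
    have e1 : (fun x : X => (1 : ℝ) + u x ^ 2 + v x ^ 2) =
        (fun x : X => (1 : ℝ) + u x ^ 2) + fun x : X => v x ^ 2 := rfl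
    have e2 : (fun x : X => (1 : ℝ) + u x ^ 2) =
        (fun _ : X => (1 : ℝ)) + fun x : X => u x ^ 2 := rfl
    have step1 := eLpNorm_add_le (p := 3) (μ := μ) h1 h2 (by norm_num)
    have hum : AEStronglyMeasurable (fun x : X => u x ^ 2) μ :=
      (hu.pow measurable_const).aestronglyMeasurable
    have step2 := eLpNorm_add_le (p := 3) (μ := μ) (aestronglyMeasurable_const (b := (1:ℝ)))
      hum (by norm_num)
    rw [← e1] at step1
    rw [← e2] at step2
    calc eLpNorm (fun x => 1 + u x ^ 2 + v x ^ 2) 3 μ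
        ≤ eLpNorm (fun x : X => (1 : ℝ) + u x ^ 2) 3 μ + eLpNorm (fun x => v x ^ 2) 3 μ := step1
      _ ≤ (eLpNorm (fun _ : X => (1 : ℝ)) 3 μ + eLpNorm (fun x => u x ^ 2) 3 μ)
          + eLpNorm (fun x => v x ^ 2) 3 μ := add_le_add_left step2 _
      _ = (μ Set.univ) ^ (1 / 3 : ℝ) + (eLpNorm u 6 μ) ^ 2 + (eLpNorm v 6 μ) ^ 2 := by
          rw [hsq u, hsq v, eLpNorm_const' (1 : ℝ) (by norm_num) (by norm_num)]
          norm_num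
  -- final bound
  have hbound : eLpNorm (fun x => f (u x) - f (v x)) 2 μ ≤
      ENNReal.ofReal Cf *
        ((μ Set.univ) ^ (1 / 3 : ℝ) + (eLpNorm u 6 μ) ^ 2 + (eLpNorm v 6 μ) ^ 2) *
        eLpNorm (fun x => u x - v x) 6 μ :=
    (hmono.trans hhold).trans (mul_le_mul_left hφ3 _)
  refine ⟨⟨hfuv, hbound.trans_lt ?_⟩, hbound⟩
  have h1 : (μ Set.univ) ^ (1 / 3 : ℝ) < ⊤ :=
    ENNReal.rpow_lt_top_of_nonneg (by norm_num) hμ.ne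
  have h2 : eLpNorm (fun x => u x - v x) 6 μ < ⊤ := (hu6.sub hv6).2
  exact ENNReal.mul_lt_top
    (ENNReal.mul_lt_top ENNReal.ofReal_lt_top
      (ENNReal.add_lt_top.2 ⟨ENNReal.add_lt_top.2 ⟨h1, ENNReal.pow_lt_top hu6.2⟩,
        ENNReal.pow_lt_top hv6.2⟩)) h2
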